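/- Let y, y₁, y₂, y₃ : I → ℝ be differentiable functions on an interval I all satisfying the same Riccati equation u' = a + b·u - c·u² (with constants a, b, c ∈ ℝ), and assume y(t) ≠ y₂(t) and y₁(t) ≠ y₃(t) for all t ∈ I. Then the cross-ratio K(t) = ((y(t) - y₁(t))(y₂(t) - y₃(t))) / ((y(t) - y₂(t))(y₁(t) - y₃(t))) has derivative zero, hence is constant on I. -/

import Mathlib

theorem riccati_cross_ratio_constant (a b c : ℝ) (I : Set ℝ) (hI : Convex ℝ I)
    (y y₁ y₂ y₃ : ℝ → ℝ)
    (hy : ∀ t ∈ I, HasDerivAt y (a + b * y t - c * y t ^ 2) t)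
    (hy₁ : ∀ t ∈ I, HasDerivAt y₁ (a + b * y₁ t - c * y₁ t ^ 2) t)
    (hy₂ : ∀ t ∈ I, HasDerivAt y₂ (a + b * y₂ t - c * y₂ t ^ 2) t)
    (hy₃ : ∀ t ∈ I, HasDerivAt y₃ (a + b * y₃ t - c * y₃ t ^ 2) t)
    (hne₁ : ∀ t ∈ I, y t ≠ y₂ t) (hne₂ : ∀ t ∈ I, y₁ t ≠ y₃ t) :
    let K : ℝ → ℝ := fun t =>
      ((y t - y₁ t) * (y₂ t - y₃ t)) / ((y t - y₂ t) * (y₁ t - y₃ t))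
    (∀ t ∈ I, HasDerivAt K 0 t) ∧ (∀ s ∈ I, ∀ t ∈ I, K s = K t) := by
  intro K
  have hK : ∀ t ∈ I, HasDerivAt K 0 t := by
    intro t ht
    have hD0 : (y t - y₂ t) * (y₁ t - y₃ t) ≠ 0 :=
      mul_ne_zero (sub_ne_zero.2 (hne₁ t ht)) (sub_ne_zero.2 (hne₂ t ht))
    have hN : HasDerivAt (fun t => (y t - y₁ t) * (y₂ t - y₃ t))
        (((a + b * y t - c * y t ^ 2) - (a + b * y₁ t - c * y₁ t ^ 2)) * (y₂ t - y₃ t)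
          + (y t - y₁ t) * ((a + b * y₂ t - c * y₂ t ^ 2) - (a + b * y₃ t - c * y₃ t ^ 2))) t :=
      ((hy t ht).sub (hy₁ t ht)).mul ((hy₂ t ht).sub (hy₃ t ht))
    have hD : HasDerivAt (fun t => (y t - y₂ t) * (y₁ t - y₃ t))
        (((a + b * y t - c * y t ^ 2) - (a + b * y₂ t - c * y₂ t ^ 2)) * (y₁ t - y₃ t)
          + (y t - y₂ t) * ((a + b * y₁ t - c * y₁ t ^ 2) - (a + b * y₃ t - c * y₃ t ^ 2))) t :=
      ((hy t ht).sub (hy₂ t ht)).mul ((hy₁ t ht).sub (hy₃ t ht))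
    have := hN.div hD hD0
    convert this using 1
    · rfl
    · rfl
    · rfl
    field_simp
    ring
  refine ⟨hK, fun s hs t ht => ?_⟩
  have h := hI.norm_image_sub_le_of_norm_hasDerivWithin_le
    (fun x hx => (hK x hx).hasDerivWithinAt) (C := 0) (by simp) ht hs
  have h2 : ‖K s - K t‖ ≤ 0 := by simpa using h
  have := norm_le_zero_iff.mp h2
  linarith [sub_eq_zero.mp this]
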